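/- Let f be a polynomial (with real coefficients) expanded as f(x) = Σ_{n=0}^N a_n (x−1)^n, and let s > 1/2. Then for every x ∈ [0,1] the infinite sum Σ_{b=1}^∞ (1+b+x)^{−2s} · f(T_b(x)) converges and equals Σ_{n=0}^N a_n (−1)^n ζ(2s+n, 2+x), where ζ(s, x) = Σ_{b=0}^∞ (b+x)^{−s} is the Hurwitz zeta function and T_b(x) = (b+x)/(1+b+x). -/

import Mathlib

/-- The Hurwitz zeta function `ζ(s, x) = Σ_{b ≥ 0} (b + x)^{-s}`. -/
noncomputable def hurwitzZetaReal (s x : ℝ) : ℝ :=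
  ∑' b : ℕ, ((b : ℝ) + x) ^ (-s)

lemma summable_shifted (c p : ℝ) (hc : 1 ≤ c) (hp : 1 < p) :
    Summable (fun b : ℕ => ((b : ℝ) + c) ^ (-p)) := by
  have h1 : Summable (fun b : ℕ => ((b : ℝ) + 1) ^ (-p)) := by
    have := (summable_nat_add_iff 1).2 (Real.summable_nat_rpow.2 (by linarith : -p < -1))
    simpa using this
  refine h1.of_nonneg_of_le (fun b => Real.rpow_nonneg (by positivity) _) (fun b => ?_)
  exact Real.rpow_le_rpow_of_nonpos (by positivity) (by linarith) (by linarith)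

/-- For a polynomial `f(x) = Σ_{n=0}^N aₙ (x−1)ⁿ` and `s > 1/2`, for every `x ∈ [0,1]`
the sum `Σ_{b ≥ 1} (1+b+x)^{−2s} f(T_b(x))` converges to
`Σ_{n=0}^N aₙ (−1)ⁿ ζ(2s+n, 2+x)`, where `T_b(x) = (b+x)/(1+b+x)`. -/
theorem transfer_operator_hurwitz (N : ℕ) (a : ℕ → ℝ) (s : ℝ) (hs : 1 / 2 < s)
    (x : ℝ) (hx : x ∈ Set.Icc (0 : ℝ) 1) :
    HasSum
      (fun b : ℕ =>
        (1 + ((b : ℝ) + 1) + x) ^ (-(2 * s)) *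
          ∑ n ∈ Finset.range (N + 1),
            a n * ((((b : ℝ) + 1) + x) / (1 + ((b : ℝ) + 1) + x) - 1) ^ n)
      (∑ n ∈ Finset.range (N + 1),
        a n * (-1) ^ n * hurwitzZetaReal (2 * s + n) (2 + x)) := by
  obtain ⟨hx0, hx1⟩ := hx
  have key : ∀ n ∈ Finset.range (N + 1),
      HasSum (fun b : ℕ => a n * (-1) ^ n * ((b : ℝ) + (2 + x)) ^ (-(2 * s + n)))
        (a n * (-1) ^ n * hurwitzZetaReal (2 * s + n) (2 + x)) := by
    intro n _
    have hsum : Summable (fun b : ℕ => ((b : ℝ) + (2 + x)) ^ (-(2 * s + n))) :=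
      summable_shifted _ _ (by linarith) (by
        have : (0:ℝ) ≤ n := Nat.cast_nonneg n
        linarith)
    exact (hsum.hasSum).mul_left _
  have H := hasSum_sum key
  have heq : (fun b : ℕ =>
        (1 + ((b : ℝ) + 1) + x) ^ (-(2 * s)) *
          ∑ n ∈ Finset.range (N + 1),
            a n * ((((b : ℝ) + 1) + x) / (1 + ((b : ℝ) + 1) + x) - 1) ^ n) =
      fun b : ℕ => ∑ n ∈ Finset.range (N + 1),
        a n * (-1) ^ n * ((b : ℝ) + (2 + x)) ^ (-(2 * s + n)) := by
    funext b
    have hy : (0:ℝ) < 1 + ((b : ℝ) + 1) + x := by positivity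
    have hT : (((b : ℝ) + 1) + x) / (1 + ((b : ℝ) + 1) + x) - 1
        = -(1 + ((b : ℝ) + 1) + x)⁻¹ := by
      field_simp
      ring
    rw [hT, Finset.mul_sum]
    refine Finset.sum_congr rfl fun n _ => ?_
    have h2 : ((b : ℝ) + (2 + x)) = 1 + ((b : ℝ) + 1) + x := by ring
    have h3 : (-(1 + ((b : ℝ) + 1) + x)⁻¹) ^ n
        = (-1) ^ n * (1 + ((b : ℝ) + 1) + x) ^ (-(n : ℝ)) := by
      rw [neg_pow, inv_pow, Real.rpow_neg hy.le, Real.rpow_natCast]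
    rw [h2, h3, show -(2 * s + (n : ℝ)) = -(2 * s) + -(n : ℝ) by ring,
      Real.rpow_add hy]
    ring
  rw [heq]
  exact H
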